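/- If X and W are conditionally independent given the σ-algebra generated by V, then X and W are conditionally independent given the σ-algebra generated by the pair (V, f∘W). -/

import Mathlib

open MeasureTheory ProbabilityTheory Filter

/-- Weak union for conditional independence: if `X ⟂ W` given `mV` and
`mV ≤ m2 ≤ mV ⊔ mW` where `mW` is (essentially) the σ-algebra of `W`, then
`X ⟂ W` given `m2`. -/
lemma condIndepFun_weak_union_aux {Ω 𝒳 𝒲 : Type*} [MeasurableSpace 𝒳] [MeasurableSpace 𝒲]
    {mV mW m2 : MeasurableSpace Ω} {mΩ : MeasurableSpace Ω} [StandardBorelSpace Ω] [Nonempty Ω]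
    (μ : Measure Ω) [IsProbabilityMeasure μ]
    {X : Ω → 𝒳} {W : Ω → 𝒲} (hX : Measurable X) (hW : Measurable W)
    (hmV : mV ≤ mΩ) (hmW : mW ≤ mΩ) (hm2 : m2 ≤ mΩ)
    (hmV2 : mV ≤ m2) (h2VW : m2 ≤ mV ⊔ mW)
    (hW1 : ∀ u, MeasurableSet[mW] u → ∃ t, MeasurableSet t ∧ W ⁻¹' t = u)
    (hW2 : ∀ t : Set 𝒲, MeasurableSet t → MeasurableSet[mW] (W ⁻¹' t))
    (h : CondIndepFun mV hmV X W μ) : CondIndepFun m2 hm2 X W μ := by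
  have hmVW : mV ⊔ mW ≤ mΩ := sup_le hmV hmW
  rw [condIndepFun_iff_condExp_inter_preimage_eq_mul hX hW]
  intro s t hs ht
  have hA : MeasurableSet (X ⁻¹' s) := hX hs
  have hB : MeasurableSet (W ⁻¹' t) := hW ht
  set iA : Ω → ℝ := (X ⁻¹' s).indicator (fun _ => (1:ℝ)) with hiA_def
  have hiA_int : Integrable iA μ := (integrable_const 1).indicator hA
  set g : Ω → ℝ := μ[iA | mV] with hg_def
  have hg_int : Integrable g μ := integrable_condExp
  have ind_mul : ∀ (u : Set Ω) (φ : Ω → ℝ),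
      (fun x => φ x * u.indicator (fun _ => (1:ℝ)) x) = u.indicator φ := by
    intro u φ
    funext x
    by_cases hx : x ∈ u <;> simp [hx]
  -- the key step : g =ᵐ[μ] μ[iA | mV ⊔ mW]
  have h1 : g =ᵐ[μ] μ[iA | mV ⊔ mW] := by
    set S : Set (Set Ω) :=
      {u | ∃ sV sW, MeasurableSet[mV] sV ∧ MeasurableSet[mW] sW ∧ u = sV ∩ sW} with hS_def
    have hgen : mV ⊔ mW = MeasurableSpace.generateFrom S := by
      refine le_antisymm (sup_le ?_ ?_) (MeasurableSpace.generateFrom_le ?_)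
      · exact fun u hu => MeasurableSpace.measurableSet_generateFrom
          ⟨u, Set.univ, hu, MeasurableSet.univ, (Set.inter_univ u).symm⟩
      · exact fun u hu => MeasurableSpace.measurableSet_generateFrom
          ⟨Set.univ, u, MeasurableSet.univ, hu, (Set.univ_inter u).symm⟩
      · rintro u ⟨sV, sW, hsV, hsW, rfl⟩
        exact ((le_sup_left : mV ≤ mV ⊔ mW) _ hsV).inter ((le_sup_right : mW ≤ mV ⊔ mW) _ hsW)
    have hπ : IsPiSystem S := by
      rintro u1 ⟨sV1, sW1, hsV1, hsW1, rfl⟩ u2 ⟨sV2, sW2, hsV2, hsW2, rfl⟩ -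
      exact ⟨sV1 ∩ sV2, sW1 ∩ sW2, hsV1.inter hsV2, hsW1.inter hsW2,
        Set.inter_inter_inter_comm _ _ _ _⟩
    have h_eq_on : ∀ u, MeasurableSet[mV ⊔ mW] u →
        ∫ x in u, g x ∂μ = ∫ x in u, iA x ∂μ := by
      have hbasic : ∀ u ∈ S, ∫ x in u, g x ∂μ = ∫ x in u, iA x ∂μ := by
        rintro u ⟨sV, sW, hsV, hsW, rfl⟩
        obtain ⟨t', ht', rfl⟩ := hW1 sW hsW
        have hsVΩ : MeasurableSet sV := hmV _ hsV
        have hsWΩ : MeasurableSet (W ⁻¹' t') := hW ht'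
        have hcond := ((condIndepFun_iff_condExp_inter_preimage_eq_mul hX hW).mp h) s t' hs ht'
        have hind_int : Integrable ((W ⁻¹' t').indicator g) μ := hg_int.indicator hsWΩ
        have step1 : ∫ x in sV ∩ W ⁻¹' t', g x ∂μ
            = ∫ x in sV, (W ⁻¹' t').indicator g x ∂μ := by
          rw [setIntegral_indicator hsWΩ]
        have step2 : ∫ x in sV, (W ⁻¹' t').indicator g x ∂μ
            = ∫ x in sV, (μ[(W ⁻¹' t').indicator g | mV]) x ∂μ :=
          (setIntegral_condExp hmV hind_int hsV).symm
        have hae : μ[(W ⁻¹' t').indicator g | mV]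
            =ᵐ[μ] μ[((X ⁻¹' s) ∩ (W ⁻¹' t')).indicator (fun _ => (1:ℝ)) | mV] := by
          have hrw : (W ⁻¹' t').indicator g
              = g * (W ⁻¹' t').indicator (fun _ => (1:ℝ)) := by
            rw [← ind_mul (W ⁻¹' t') g]; rfl
          rw [hrw]
          refine (condExp_mul_of_stronglyMeasurable_left stronglyMeasurable_condExp ?_ ?_).trans ?_
          · rw [show (g * (W ⁻¹' t').indicator (fun _ => (1:ℝ)))
                = (W ⁻¹' t').indicator g from by rw [← ind_mul (W ⁻¹' t') g]; rfl]
            exact hind_int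
          · exact (integrable_const 1).indicator hsWΩ
          · exact hcond.symm
        have step3 : ∫ x in sV, (μ[(W ⁻¹' t').indicator g | mV]) x ∂μ
            = ∫ x in sV, (μ[((X ⁻¹' s) ∩ (W ⁻¹' t')).indicator (fun _ => (1:ℝ)) | mV]) x ∂μ :=
          setIntegral_congr_ae hsVΩ (hae.mono fun x hx _ => hx)
        have step4 : ∫ x in sV, (μ[((X ⁻¹' s) ∩ (W ⁻¹' t')).indicator (fun _ => (1:ℝ)) | mV]) x ∂μ
            = ∫ x in sV, ((X ⁻¹' s) ∩ (W ⁻¹' t')).indicator (fun _ => (1:ℝ)) x ∂μ :=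
          setIntegral_condExp hmV ((integrable_const 1).indicator (hA.inter hsWΩ)) hsV
        have step5 : ∫ x in sV, ((X ⁻¹' s) ∩ (W ⁻¹' t')).indicator (fun _ => (1:ℝ)) x ∂μ
            = ∫ x in sV ∩ W ⁻¹' t', iA x ∂μ := by
          rw [setIntegral_indicator (hA.inter hsWΩ), hiA_def, setIntegral_indicator hA,
            setIntegral_const, setIntegral_const]
          have hset : sV ∩ (X ⁻¹' s ∩ W ⁻¹' t') = sV ∩ W ⁻¹' t' ∩ X ⁻¹' s := by
            ext x
            simp only [Set.mem_inter_iff]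
            tauto
          rw [hset]
        rw [step1, step2, step3, step4, step5]
      refine MeasurableSpace.induction_on_inter (m := mV ⊔ mW)
        (C := fun u _ => ∫ x in u, g x ∂μ = ∫ x in u, iA x ∂μ) (s := S) hgen hπ ?_ hbasic ?_ ?_
      · simp
      · intro u hu hCu
        have huΩ : MeasurableSet u := hmVW _ hu
        have e1 : ∫ x in u, g x ∂μ + ∫ x in uᶜ, g x ∂μ = ∫ x, g x ∂μ :=
          integral_add_compl huΩ hg_int
        have e2 : ∫ x in u, iA x ∂μ + ∫ x in uᶜ, iA x ∂μ = ∫ x, iA x ∂μ :=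
          integral_add_compl huΩ hiA_int
        have e3 : ∫ x, g x ∂μ = ∫ x, iA x ∂μ := integral_condExp hmV
        linarith
      · intro u hdisj humeas hCu
        have humΩ : ∀ i, MeasurableSet (u i) := fun i => hmVW _ (humeas i)
        rw [integral_iUnion humΩ hdisj hg_int.integrableOn,
          integral_iUnion humΩ hdisj hiA_int.integrableOn]
        exact tsum_congr hCu
    exact ae_eq_condExp_of_forall_setIntegral_eq (g := g) hmVW hiA_int
      (fun u _ _ => hg_int.integrableOn) (fun u hu _ => h_eq_on u hu)
      (by rw [hg_def]; exact StronglyMeasurable.aestronglyMeasurable (μ := μ) ((stronglyMeasurable_condExp (m := mV) (f := iA) (μ := μ)).mono (le_sup_left (b := mW))))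
  -- now assemble
  set iB : Ω → ℝ := (W ⁻¹' t).indicator (fun _ => (1:ℝ)) with hiB_def
  have hiB_int : Integrable iB μ := (integrable_const 1).indicator hB
  have hB_mVW : MeasurableSet[mV ⊔ mW] (W ⁻¹' t) :=
    (le_sup_right : mW ≤ mV ⊔ mW) _ (hW2 t ht)
  have hiAB_eq : ((X ⁻¹' s) ∩ (W ⁻¹' t)).indicator (fun _ => (1:ℝ)) = iA * iB := by
    funext x
    by_cases hx : x ∈ X ⁻¹' s <;> by_cases hx' : x ∈ W ⁻¹' t <;>
      simp [hiA_def, hiB_def, hx, hx', Set.indicator_apply]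
  have hiAB_int : Integrable (iA * iB) μ := by
    rw [show iA * iB = (fun x => iA x * iB x) from rfl, ind_mul (W ⁻¹' t) iA]
    exact hiA_int.indicator hB
  have e2 : μ[iA * iB | mV ⊔ mW] =ᵐ[μ] fun x => iB x * g x := by
    have hcomm : iA * iB = iB * iA := mul_comm _ _
    rw [hcomm]
    refine (condExp_mul_of_stronglyMeasurable_left (stronglyMeasurable_const.indicator hB_mVW)
      (by rw [← hcomm]; exact hiAB_int) hiA_int).trans ?_
    exact EventuallyEq.mul (EventuallyEq.refl _ _) h1.symm
  have hgiB_int : Integrable (fun x => g x * iB x) μ := by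
    rw [ind_mul (W ⁻¹' t) g]
    exact hg_int.indicator hB
  have e3 : μ[(fun x => iB x * g x) | m2] =ᵐ[μ] fun x => g x * (μ[iB | m2]) x := by
    have hcomm : (fun x => iB x * g x) = g * iB := by
      funext x; exact mul_comm _ _
    rw [hcomm]
    exact condExp_mul_of_stronglyMeasurable_left (stronglyMeasurable_condExp.mono hmV2)
      (by exact hgiB_int) hiB_int
  have e4 : μ[iA | m2] =ᵐ[μ] g := by
    refine ((condExp_condExp_of_le h2VW hmVW).symm.trans
      (condExp_congr_ae h1.symm)).trans ?_
    rw [condExp_of_stronglyMeasurable hm2 (stronglyMeasurable_condExp.mono hmV2) hg_int]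
  calc μ[((X ⁻¹' s) ∩ (W ⁻¹' t)).indicator (fun _ => (1:ℝ)) | m2]
      =ᵐ[μ] μ[(μ[((X ⁻¹' s) ∩ (W ⁻¹' t)).indicator (fun _ => (1:ℝ)) | mV ⊔ mW]) | m2] :=
        (condExp_condExp_of_le h2VW hmVW).symm
    _ =ᵐ[μ] μ[(fun x => iB x * g x) | m2] := by
        refine condExp_congr_ae ?_
        rw [hiAB_eq]
        exact e2
    _ =ᵐ[μ] fun x => g x * (μ[iB | m2]) x := e3
    _ =ᵐ[μ] fun ω => (μ[iA | m2]) ω * (μ[iB | m2]) ω := by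
        filter_upwards [e4] with ω hω
        rw [hω]


/-- If `X` and `W` are conditionally independent given the σ-algebra generated by `V`,
then `X` and `W` are conditionally independent given the σ-algebra generated by the
pair `(V, f ∘ W)`. -/
theorem condIndepFun_of_condIndepFun_comap_pair_of_map
    {Ω 𝒳 𝒲 𝒱 𝒰 : Type*}
    [MeasurableSpace Ω] [StandardBorelSpace Ω] [Nonempty Ω]
    [MeasurableSpace 𝒳] [StandardBorelSpace 𝒳]
    [MeasurableSpace 𝒲] [StandardBorelSpace 𝒲]
    [MeasurableSpace 𝒱] [StandardBorelSpace 𝒱]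
    [MeasurableSpace 𝒰] [StandardBorelSpace 𝒰]
    (μ : Measure Ω) [IsProbabilityMeasure μ]
    (X : Ω → 𝒳) (W : Ω → 𝒲) (V : Ω → 𝒱) (f : 𝒲 → 𝒰)
    (hX : Measurable X) (hW : Measurable W) (hV : Measurable V) (hf : Measurable f)
    (h : CondIndepFun (MeasurableSpace.comap V inferInstance) hV.comap_le X W μ) :
    CondIndepFun (MeasurableSpace.comap (fun ω => (V ω, f (W ω))) inferInstance)
      (Measurable.comap_le (hV.prodMk (hf.comp hW))) X W μ := by
  have hmV2 : MeasurableSpace.comap V inferInstance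
      ≤ MeasurableSpace.comap (fun ω => (V ω, f (W ω))) inferInstance := by
    have heq : MeasurableSpace.comap V inferInstance
        = MeasurableSpace.comap (fun ω => (V ω, f (W ω)))
          (MeasurableSpace.comap Prod.fst inferInstance) := by
      rw [MeasurableSpace.comap_comp]; rfl
    rw [heq]
    exact MeasurableSpace.comap_mono measurable_fst.comap_le
  have h2VW : MeasurableSpace.comap (fun ω => (V ω, f (W ω))) inferInstance
      ≤ MeasurableSpace.comap V inferInstance ⊔ MeasurableSpace.comap W inferInstance := by
    refine Measurable.comap_le (Measurable.prodMk ?_ ?_)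
    · exact (measurable_iff_comap_le.mpr le_rfl).mono le_sup_left le_rfl
    · exact (hf.comp (measurable_iff_comap_le.mpr le_rfl)).mono le_sup_right le_rfl
  exact condIndepFun_weak_union_aux μ hX hW hV.comap_le hW.comap_le
    (Measurable.comap_le (hV.prodMk (hf.comp hW))) hmV2 h2VW
    (fun u hu => hu) (fun t ht => ⟨t, ht, rfl⟩) h
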